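/- (Bounded gradient deviation for NEAR-DGDᵗ) Suppose 0 < α < 1/L and y_{i,0} = s_0 for all i. Then for all k ≥ 1 and all i: ‖∇f_i(x_{i,k}) − ∇f_i(x̄_k)‖ ≤ βᵗ D L_i and ‖g_k − ḡ_k‖ ≤ βᵗ D L, where x̄_k = (1/n)Σ_i x_{i,k}, g_k = (1/n)Σ_i ∇f_i(x_{i,k}), ḡ_k = (1/n)Σ_i ∇f_i(x̄_k), and D = ‖y_0 − u*‖ + ((ν + 4)/ν)‖u*‖ with u* the concatenation of the minimizers u_i* of the f_i, ν = 2αγ, γ = min_i μ_i L_i/(μ_i + L_i). -/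

import Mathlib

open Finset Filter

noncomputable section

/-- A block `ℝ^p` with the Euclidean norm. -/
abbrev Vec (p : ℕ) := EuclideanSpace ℝ (Fin p)

/-- The concatenated space `ℝ^{np}` (n blocks of size p) with the Euclidean norm. -/
abbrev CVec (n p : ℕ) := PiLp 2 (fun _ : Fin n => Vec p)

/-- Action of the Kronecker product `W ⊗ I_p` on a concatenated vector of `ℝ^{np}`. -/
def kron {n p : ℕ} (W : Matrix (Fin n) (Fin n) ℝ) (x : CVec n p) : CVec n p :=
  WithLp.toLp 2 (fun i => ∑ j, W i j • x j)

/-- Concatenated gradient `∇f(x) = (∇f₁(x₁); …; ∇fₙ(xₙ))`. -/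
def gradConcat {n p : ℕ} (f : Fin n → Vec p → ℝ) (x : CVec n p) : CVec n p :=
  WithLp.toLp 2 (fun i => gradient (f i) (x i))


open scoped RealInnerProductSpace Topology
open Matrix

section AnalysisLemmas
variable {E : Type*} [NormedAddCommGroup E] [InnerProductSpace ℝ E] [CompleteSpace E]

theorem NDGD.lineDeriv {f : E → ℝ} {f' : E → E} (hf' : ∀ z, HasGradientAt f (f' z) z)
    (z v : E) (s : ℝ) :
    HasDerivAt (fun s : ℝ => f (z + s • v)) ⟪f' (z + s • v), v⟫ s := by
  have hline : HasDerivAt (fun s : ℝ => z + s • v) v s := by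
    simpa using ((hasDerivAt_id s).smul_const v).const_add z
  have := ((hf' (z + s • v)).hasFDerivAt).comp_hasDerivAt s hline
  simpa [InnerProductSpace.toDual_apply_apply, Function.comp_def] using this

/-- Descent lemma. -/
theorem NDGD.descent {f : E → ℝ} {f' : E → E} (hf' : ∀ z, HasGradientAt f (f' z) z)
    {c : ℝ} (hlip : ∀ a b, ‖f' a - f' b‖ ≤ c * ‖a - b‖) (z v : E) :
    f (z + v) ≤ f z + ⟪f' z, v⟫ + c / 2 * ‖v‖ ^ 2 := by
  set g : ℝ → ℝ := fun s => f (z + s • v) - s * ⟪f' z, v⟫ - c / 2 * s ^ 2 * ‖v‖ ^ 2 with hg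
  have hderiv : ∀ s : ℝ, HasDerivAt g
      (⟪f' (z + s • v), v⟫ - ⟪f' z, v⟫ - c * s * ‖v‖ ^ 2) s := by
    intro s
    have h1 := NDGD.lineDeriv hf' z v s
    have h2 : HasDerivAt (fun s : ℝ => s * ⟪f' z, v⟫) ⟪f' z, v⟫ s := by
      simpa using (hasDerivAt_id s).mul_const ⟪f' z, v⟫
    have h3 : HasDerivAt (fun s : ℝ => c / 2 * s ^ 2 * ‖v‖ ^ 2) (c * s * ‖v‖ ^ 2) s := by
      have := ((hasDerivAt_pow 2 s).const_mul (c / 2)).mul_const (‖v‖ ^ 2)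
      refine this.congr_deriv ?_; ring
    exact (h1.sub h2).sub h3
  have hanti : AntitoneOn g (Set.Icc 0 1) := by
    apply antitoneOn_of_deriv_nonpos (convex_Icc 0 1)
    · exact fun s _ => (hderiv s).differentiableAt.continuousAt.continuousWithinAt
    · intro s hs
      exact (hderiv s).differentiableAt.differentiableWithinAt
    · intro s hs
      rw [interior_Icc] at hs
      rw [(hderiv s).deriv]
      have hb : ⟪f' (z + s • v) - f' z, v⟫ ≤ c * s * ‖v‖ ^ 2 := by
        calc ⟪f' (z + s • v) - f' z, v⟫ ≤ ‖f' (z + s • v) - f' z‖ * ‖v‖ :=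
              real_inner_le_norm _ _
          _ ≤ (c * ‖(z + s • v) - z‖) * ‖v‖ := by
              have := hlip (z + s • v) z
              nlinarith [norm_nonneg v]
          _ = c * s * ‖v‖ ^ 2 := by
              rw [add_sub_cancel_left, norm_smul]
              simp [abs_of_pos hs.1]; ring
      rw [inner_sub_left] at hb; linarith
  have h01 := hanti (Set.left_mem_Icc.2 one_pos.le) (Set.right_mem_Icc.2 one_pos.le) one_pos.le
  simp only [hg, one_smul, zero_smul, add_zero, one_pow, mul_one, zero_pow, mul_zero,
    sub_zero, zero_mul] at h01
  linarith

/-- First-order lower bound for convex differentiable functions. -/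
theorem NDGD.convex_lower {f : E → ℝ} {f' : E → E} (hf' : ∀ z, HasGradientAt f (f' z) z)
    (hconv : ConvexOn ℝ Set.univ f) (z v : E) :
    f z + ⟪f' z, v⟫ ≤ f (z + v) := by
  set g : ℝ → ℝ := fun s => f (z + s • v) with hg
  have hd : HasDerivAt g ⟪f' z, v⟫ 0 := by
    simpa using NDGD.lineDeriv hf' z v 0
  have hslope : Tendsto (slope g 0) (𝓝[>] 0) (𝓝 ⟪f' z, v⟫) :=
    (hasDerivAt_iff_tendsto_slope.1 hd).mono_left
      (nhdsWithin_mono 0 (fun x hx => ne_of_gt hx))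
  have hbound : ∀ᶠ s in 𝓝[>] (0:ℝ), slope g 0 s ≤ f (z + v) - f z := by
    filter_upwards [Ioo_mem_nhdsGT_of_mem (Set.mem_Ico.2 ⟨le_refl (0:ℝ), one_pos⟩)]
    intro s hs
    have hs0 : 0 < s := hs.1
    have hcvx := hconv.2 (Set.mem_univ z) (Set.mem_univ (z + v))
      (by linarith [hs.2] : (0:ℝ) ≤ 1 - s) hs0.le (by ring)
    have heq : (1 - s) • z + s • (z + v) = z + s • v := by
      rw [smul_add]; module
    rw [heq] at hcvx
    simp only [smul_eq_mul] at hcvx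
    have key : g s - g 0 ≤ s * (f (z + v) - f z) := by
      simp only [hg, zero_smul, add_zero]; nlinarith
    have : slope g 0 s = (g s - g 0) / s := by
      rw [slope_def_field, sub_zero]
    rw [this, div_le_iff₀ hs0]; linarith
  have := le_of_tendsto hslope hbound
  linarith

theorem NDGD.hasGradientAt_inner_const (w z : E) :
    HasGradientAt (fun z : E => ⟪w, z⟫) w z := by
  have : HasFDerivAt (fun z : E => ⟪w, z⟫) (InnerProductSpace.toDual ℝ E w) z := by
    convert (InnerProductSpace.toDual ℝ E w).hasFDerivAt (x := z) using 1
    ext y; simp [InnerProductSpace.toDual_apply_apply]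
  simpa using this.hasGradientAt

theorem NDGD.HasGradientAt.sub {f g : E → ℝ} {f' g' z : E}
    (hf : HasGradientAt f f' z) (hg : HasGradientAt g g' z) :
    HasGradientAt (fun z => f z - g z) (f' - g') z := by
  have := hf.hasFDerivAt.sub hg.hasFDerivAt
  rw [hasGradientAt_iff_hasFDerivAt, map_sub]
  exact this

theorem NDGD.hasGradientAt_half_normSq (μ : ℝ) (z : E) :
    HasGradientAt (fun z : E => μ / 2 * ‖z‖ ^ 2) (μ • z) z := by
  have h1 : HasFDerivAt (fun z : E => ⟪z, z⟫)
      ((fderivInnerCLM ℝ (z, z)).comp ((ContinuousLinearMap.id ℝ E).prod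
        (ContinuousLinearMap.id ℝ E))) z :=
    (hasFDerivAt_id z).inner ℝ (hasFDerivAt_id z)
  have h2 := h1.const_mul (μ/2)
  have heq : ((μ/2) • ((fderivInnerCLM ℝ (z, z)).comp ((ContinuousLinearMap.id ℝ E).prod
        (ContinuousLinearMap.id ℝ E)))) = InnerProductSpace.toDual ℝ E (μ • z) := by
    ext v
    simp [fderivInnerCLM, real_inner_smul_left, real_inner_comm]
    ring
  rw [heq] at h2
  have h3 : (fun z : E => μ / 2 * ‖z‖ ^ 2) = fun z : E => μ / 2 * ⟪z, z⟫ := by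
    funext w; rw [real_inner_self_eq_norm_sq]
  rw [h3]
  simpa using h2.hasGradientAt

theorem NDGD.concave_inner (w : E) : ConcaveOn ℝ Set.univ (fun z : E => ⟪w, z⟫) :=
  ⟨convex_univ, fun x _ y _ a b _ _ _ => le_of_eq (by
    simp [inner_add_right, real_inner_smul_right])⟩

/-- Cocoercivity (Baillon–Haddad) from convexity + quadratic upper bound. -/
theorem NDGD.cocoercive {f : E → ℝ} {f' : E → E} (hf' : ∀ z, HasGradientAt f (f' z) z)
    (hconv : ConvexOn ℝ Set.univ f) {c : ℝ} (hc : 0 < c)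
    (hdesc : ∀ z v, f (z + v) ≤ f z + ⟪f' z, v⟫ + c / 2 * ‖v‖ ^ 2)
    (a b : E) :
    (1 / c) * ‖f' a - f' b‖ ^ 2 ≤ ⟪f' a - f' b, a - b⟫ := by
  have key : ∀ u v : E, f u - ⟪f' u, u⟫ ≤ f v - ⟪f' u, v⟫ - 1/(2*c) * ‖f' v - f' u‖^2 := by
    intro u v
    set φ : E → ℝ := fun z => f z - ⟪f' u, z⟫ with hφ
    set φ' : E → E := fun z => f' z - f' u with hφ'
    have hφg : ∀ z, HasGradientAt φ (φ' z) z := fun z =>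
      NDGD.HasGradientAt.sub (hf' z) (NDGD.hasGradientAt_inner_const (f' u) z)
    have hφconv : ConvexOn ℝ Set.univ φ := hconv.sub (NDGD.concave_inner (f' u))
    have hφdesc : ∀ z v, φ (z + v) ≤ φ z + ⟪φ' z, v⟫ + c / 2 * ‖v‖ ^ 2 := by
      intro z v
      have := hdesc z v
      simp only [hφ, hφ', inner_add_right, inner_sub_left]
      linarith
    have hmin : ∀ z, φ u ≤ φ z := by
      intro z
      have := NDGD.convex_lower hφg hφconv u (z - u)
      simpa [hφ', inner_sub_left, sub_self, inner_zero_left] using this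
    have hstep := hφdesc v (-((1/c) • φ' v))
    have h2 := hmin (v + -((1/c) • φ' v))
    have hinner : ⟪φ' v, -((1/c) • φ' v)⟫ = -(1/c) * ‖φ' v‖^2 := by
      rw [inner_neg_right, real_inner_smul_right, real_inner_self_eq_norm_sq]; ring
    have hnorm : ‖-((1/c) • φ' v)‖^2 = (1/c)^2 * ‖φ' v‖^2 := by
      rw [norm_neg, norm_smul, mul_pow, Real.norm_eq_abs, sq_abs]
    rw [hinner, hnorm] at hstep
    have hc2 : c / 2 * ((1/c)^2 * ‖φ' v‖^2) = 1/(2*c) * ‖φ' v‖^2 := by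
      field_simp
    rw [hc2] at hstep
    have h2c : 1/c * ‖φ' v‖^2 = 2 * (1/(2*c) * ‖φ' v‖^2) := by field_simp
    have : φ u ≤ φ v - 1/(2*c) * ‖φ' v‖^2 := by linarith
    simpa [hφ, hφ'] using this
  have h1 := key a b
  have h2 := key b a
  have hn : ‖f' a - f' b‖ = ‖f' b - f' a‖ := norm_sub_rev _ _
  have hi : ⟪f' a - f' b, a - b⟫ = ⟪f' a, a⟫ - ⟪f' a, b⟫ - ⟪f' b, a⟫ + ⟪f' b, b⟫ := by
    simp [inner_sub_left, inner_sub_right]; ring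
  rw [← hn] at h1
  have h2c : 1/c * ‖f' a - f' b‖^2 = 2 * (1/(2*c) * ‖f' a - f' b‖^2) := by field_simp
  linarith

/-- Strong monotonicity of the gradient of a strongly convex function. -/
theorem NDGD.strong_mono {f : E → ℝ} {f' : E → E} (hf' : ∀ z, HasGradientAt f (f' z) z)
    {μ : ℝ} (hsc : StrongConvexOn Set.univ μ f) (a b : E) :
    μ * ‖a - b‖^2 ≤ ⟪f' a - f' b, a - b⟫ := by
  set h : E → ℝ := fun z => f z - μ / 2 * ‖z‖ ^ 2 with hh
  set h' : E → E := fun z => f' z - μ • z with hh'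
  have hhg : ∀ z, HasGradientAt h (h' z) z := fun z =>
    NDGD.HasGradientAt.sub (hf' z) (NDGD.hasGradientAt_half_normSq μ z)
  have hhconv : ConvexOn ℝ Set.univ h := strongConvexOn_iff_convex.1 hsc
  have k1 := NDGD.convex_lower hhg hhconv b (a - b)
  have k2 := NDGD.convex_lower hhg hhconv a (b - a)
  rw [add_sub_cancel] at k1
  rw [add_sub_cancel] at k2
  have hsum : ⟪h' b, a - b⟫ + ⟪h' a, b - a⟫ ≤ 0 := by linarith
  have hexp : ⟪h' b, a - b⟫ + ⟪h' a, b - a⟫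
      = -(⟪f' a - f' b, a - b⟫ - μ * ‖a - b‖^2) := by
    simp only [hh', inner_sub_left, inner_sub_right, real_inner_smul_left,
      ← real_inner_self_eq_norm_sq]
    rw [real_inner_comm b a]; ring
  rw [hexp] at hsum
  linarith

/-- The interpolation inequality. -/
theorem NDGD.interpolation {f : E → ℝ} {f' : E → E} (hf' : ∀ z, HasGradientAt f (f' z) z)
    {μ c : ℝ} (hμ : 0 < μ) (hμc : μ ≤ c)
    (hsc : StrongConvexOn Set.univ μ f)
    (hlip : ∀ a b, ‖f' a - f' b‖ ≤ c * ‖a - b‖) (a b : E) :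
    μ * c / (μ + c) * ‖a - b‖^2 + 1 / (μ + c) * ‖f' a - f' b‖^2 ≤ ⟪f' a - f' b, a - b⟫ := by
  have hc : 0 < c := lt_of_lt_of_le hμ hμc
  have hμco : 0 < μ + c := by linarith
  rcases eq_or_lt_of_le hμc with heq | hlt
  · -- μ = c
    subst heq
    have h1 := NDGD.strong_mono hf' hsc a b
    have h2 := hlip a b
    have hn : (0:ℝ) ≤ ‖a - b‖ := norm_nonneg _
    have : ‖f' a - f' b‖^2 ≤ μ^2 * ‖a-b‖^2 := by nlinarith [norm_nonneg (f' a - f' b)]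
    have htarget : μ * μ / (μ + μ) * ‖a - b‖^2 + 1 / (μ + μ) * ‖f' a - f' b‖^2
        ≤ μ * ‖a - b‖^2 := by
      rw [div_mul_eq_mul_div, div_mul_eq_mul_div, ← add_div,
        div_le_iff₀ (by linarith : (0:ℝ) < μ + μ)]
      nlinarith
    linarith
  · -- μ < c
    set h : E → ℝ := fun z => f z - μ / 2 * ‖z‖ ^ 2 with hh
    set h' : E → E := fun z => f' z - μ • z with hh'
    have hhg : ∀ z, HasGradientAt h (h' z) z := fun z =>
      NDGD.HasGradientAt.sub (hf' z) (NDGD.hasGradientAt_half_normSq μ z)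
    have hhconv : ConvexOn ℝ Set.univ h := strongConvexOn_iff_convex.1 hsc
    have hfdesc := NDGD.descent hf' hlip
    have hhdesc : ∀ z v, h (z + v) ≤ h z + ⟪h' z, v⟫ + (c - μ) / 2 * ‖v‖ ^ 2 := by
      intro z v
      have h1 := hfdesc z v
      have h2 : ‖z + v‖^2 = ‖z‖^2 + 2 * ⟪z, v⟫ + ‖v‖^2 := by
        rw [← real_inner_self_eq_norm_sq, ← real_inner_self_eq_norm_sq,
          ← real_inner_self_eq_norm_sq, real_inner_add_add_self]
      simp only [hh, hh', inner_sub_left, real_inner_smul_left]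
      rw [h2]; linarith
    have hco := NDGD.cocoercive hhg hhconv (by linarith : (0:ℝ) < c - μ) hhdesc a b
    -- expand
    have e1 : h' a - h' b = (f' a - f' b) - μ • (a - b) := by
      simp only [hh', smul_sub]; abel
    have e2 : ‖h' a - h' b‖^2
        = ‖f' a - f' b‖^2 - 2*μ*⟪f' a - f' b, a - b⟫ + μ^2 * ‖a - b‖^2 := by
      rw [e1, ← real_inner_self_eq_norm_sq, inner_sub_sub_self]
      rw [real_inner_smul_left, real_inner_smul_right, real_inner_smul_left,
        real_inner_smul_right, ← real_inner_self_eq_norm_sq, ← real_inner_self_eq_norm_sq]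
      rw [real_inner_comm (a-b) (f' a - f' b)]
      ring
    have e3 : ⟪h' a - h' b, a - b⟫ = ⟪f' a - f' b, a - b⟫ - μ * ‖a - b‖^2 := by
      rw [e1, inner_sub_left, real_inner_smul_left, real_inner_self_eq_norm_sq]
    rw [e3, e2] at hco
    have hcm : 0 < c - μ := by linarith
    rw [div_mul_eq_mul_div, div_le_iff₀ hcm] at hco
    rw [div_mul_eq_mul_div, div_mul_eq_mul_div, ← add_div, div_le_iff₀ hμco]
    nlinarith [hco]

/-- `μ ≤ c` whenever a nonzero vector exists. -/
theorem NDGD.mu_le_c {f : E → ℝ} {f' : E → E} (hf' : ∀ z, HasGradientAt f (f' z) z)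
    {μ c : ℝ} (hsc : StrongConvexOn Set.univ μ f)
    (hlip : ∀ a b, ‖f' a - f' b‖ ≤ c * ‖a - b‖) (w : E) (hw : w ≠ 0) : μ ≤ c := by
  have h1 := NDGD.strong_mono hf' hsc w 0
  have h2 := hlip w 0
  have h3 := real_inner_le_norm (f' w - f' 0) (w - 0)
  have hn : 0 < ‖w - 0‖ := by simpa [sub_zero] using norm_pos_iff.2 hw
  nlinarith [norm_nonneg (f' w - f' 0), mul_le_mul_of_nonneg_right h2 hn.le, mul_pos hn hn]

/-- Contraction of the gradient step. -/
theorem NDGD.contraction {f : E → ℝ} {f' : E → E} (hf' : ∀ z, HasGradientAt f (f' z) z)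
    {μ c : ℝ} (hμ : 0 < μ) (hμc : μ ≤ c)
    (hsc : StrongConvexOn Set.univ μ f)
    (hlip : ∀ a b, ‖f' a - f' b‖ ≤ c * ‖a - b‖)
    {u : E} (hu : f' u = 0) {α : ℝ} (hα : 0 < α) (hαc : α * (μ + c) ≤ 2) (z : E) :
    ‖z - α • f' z - u‖ ^ 2 ≤ (1 - 2 * α * (μ * c / (μ + c))) * ‖z - u‖ ^ 2 := by
  have hμco : 0 < μ + c := by linarith
  have hint := NDGD.interpolation hf' hμ hμc hsc hlip z u
  rw [hu, sub_zero] at hint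
  have hexp : ‖z - α • f' z - u‖ ^ 2
      = ‖z - u‖^2 - 2 * α * ⟪f' z, z - u⟫ + α^2 * ‖f' z‖^2 := by
    have : z - α • f' z - u = (z - u) - α • f' z := by abel
    rw [this, ← real_inner_self_eq_norm_sq, inner_sub_sub_self,
      real_inner_smul_left, real_inner_smul_right, real_inner_smul_left,
      real_inner_smul_right, ← real_inner_self_eq_norm_sq, ← real_inner_self_eq_norm_sq,
      real_inner_comm (z - u) (f' z)]
    ring
  rw [hexp]
  rw [div_mul_eq_mul_div, div_mul_eq_mul_div, ← add_div, div_le_iff₀ hμco] at hint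
  have hαq : α^2 * (μ + c) ≤ 2 * α := by nlinarith
  have key : (μ + c) * (‖z - u‖^2 - 2*α*⟪f' z, z - u⟫ + α^2*‖f' z‖^2)
      ≤ (μ + c) * ((1 - 2*α*(μ*c/(μ+c))) * ‖z - u‖^2) := by
    have hid : (μ+c) * ((1 - 2*α*(μ*c/(μ+c))) * ‖z - u‖^2)
        = ((μ+c) - 2*α*μ*c) * ‖z - u‖^2 := by
      have h0 : μ*c/(μ+c)*(μ+c) = μ*c := div_mul_cancel₀ _ hμco.ne'
      linear_combination (-(2*α*‖z - u‖^2)) * h0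
    rw [hid]
    have p1 := mul_le_mul_of_nonneg_right hαq (sq_nonneg ‖f' z‖)
    have p2 := mul_le_mul_of_nonneg_left hint (by linarith : (0:ℝ) ≤ 2 * α)
    nlinarith [p1, p2]
  exact le_of_mul_le_mul_left key hμco
end AnalysisLemmas

section MatrixLemmas
variable {n : ℕ} {W : Matrix (Fin n) (Fin n) ℝ}

/-- mulVec as an operation on EuclideanSpace. -/
def mvE (M : Matrix (Fin n) (Fin n) ℝ) (u : EuclideanSpace ℝ (Fin n)) :
    EuclideanSpace ℝ (Fin n) := WithLp.toLp 2 (fun i => ∑ j, M i j * u j)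

theorem Wsymm_apply (hM : W.IsHermitian) (i j : Fin n) : W j i = W i j := by
  conv_lhs => rw [← hM]
  simp [Matrix.conjTranspose_apply]

theorem mvE_symm_inner (hM : W.IsHermitian) (u v : EuclideanSpace ℝ (Fin n)) :
    ⟪mvE W u, v⟫ = ⟪u, mvE W v⟫ := by
  simp only [PiLp.inner_apply, RCLike.inner_apply, conj_trivial, mvE]
  rw [show (∑ x, v x * ∑ x_1, W x x_1 * u x_1) = ∑ i, (∑ j, W i j * u j) * v i from
      Finset.sum_congr rfl fun i _ => mul_comm _ _,
    show (∑ x, (∑ x_1, W x x_1 * v x_1) * u x) = ∑ j, u j * ∑ i, W j i * v i from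
      Finset.sum_congr rfl fun i _ => mul_comm _ _]
  calc ∑ i, (∑ j, W i j * u j) * v i
      = ∑ i, ∑ j, u j * (W i j * v i) := by
        apply sum_congr rfl; intro i _; rw [Finset.sum_mul]
        apply sum_congr rfl; intro j _; ring
    _ = ∑ j, ∑ i, u j * (W i j * v i) := Finset.sum_comm
    _ = ∑ j, u j * ∑ i, W j i * v i := by
        apply sum_congr rfl; intro j _; rw [Finset.mul_sum]
        apply sum_congr rfl; intro i _; rw [Wsymm_apply hM j i]

theorem mvE_mul (A B : Matrix (Fin n) (Fin n) ℝ) (u : EuclideanSpace ℝ (Fin n)) :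
    mvE (A * B) u = mvE A (mvE B u) := by
  ext i
  simp only [mvE, Matrix.mul_apply, Finset.sum_mul]
  rw [Finset.sum_comm]
  apply sum_congr rfl; intro k _; rw [Finset.mul_sum]
  apply sum_congr rfl; intro j _; ring

theorem mvE_smul (A : Matrix (Fin n) (Fin n) ℝ) (a : ℝ) (u : EuclideanSpace ℝ (Fin n)) :
    mvE A (a • u) = a • mvE A u := by
  ext i
  simp only [mvE, PiLp.smul_apply, smul_eq_mul, Finset.mul_sum]
  apply sum_congr rfl; intro j _; ring

theorem mvE_eigen (hM : W.IsHermitian) (m : Fin n) :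
    mvE W (hM.eigenvectorBasis m) = hM.eigenvalues m • hM.eigenvectorBasis m :=
  by ext i; exact congrFun (hM.mulVec_eigenvectorBasis m) i

theorem mvE_pow_eigen (hM : W.IsHermitian) (t : ℕ) (m : Fin n) :
    mvE (W ^ t) (hM.eigenvectorBasis m) = (hM.eigenvalues m) ^ t • hM.eigenvectorBasis m := by
  induction t with
  | zero => ext i; simp [mvE, Matrix.one_apply]
  | succ t ih =>
    rw [pow_succ, mvE_mul, mvE_eigen hM m, mvE_smul, ih, smul_smul, ← pow_succ']

theorem norm_sq_eq_sum_inner (b : OrthonormalBasis (Fin n) ℝ (EuclideanSpace ℝ (Fin n)))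
    (v : EuclideanSpace ℝ (Fin n)) : ‖v‖ ^ 2 = ∑ m, ⟪b m, v⟫ ^ 2 := by
  rw [← b.repr.norm_map v, EuclideanSpace.norm_eq]
  rw [Real.sq_sqrt (by positivity)]
  apply Finset.sum_congr rfl; intro m _
  rw [b.repr_apply_apply, real_inner_comm, Real.norm_eq_abs, sq_abs]

/-- Spectral bound. -/
theorem spec_bound (hM : W.IsHermitian) (t : ℕ) {r : ℝ} (hr : 0 ≤ r)
    (u : EuclideanSpace ℝ (Fin n))
    (hcoef : ∀ m, ⟪hM.eigenvectorBasis m, u⟫ ≠ 0 → |hM.eigenvalues m| ≤ r) :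
    ‖mvE (W ^ t) u‖ ≤ r ^ t * ‖u‖ := by
  have hsq : ‖mvE (W ^ t) u‖ ^ 2 ≤ (r ^ t * ‖u‖) ^ 2 := by
    rw [norm_sq_eq_sum_inner hM.eigenvectorBasis, mul_pow,
      norm_sq_eq_sum_inner hM.eigenvectorBasis u, Finset.mul_sum]
    apply Finset.sum_le_sum
    intro m _
    have hc : ⟪hM.eigenvectorBasis m, mvE (W ^ t) u⟫
        = hM.eigenvalues m ^ t * ⟪hM.eigenvectorBasis m, u⟫ := by
      rw [← mvE_symm_inner (hM.pow t), mvE_pow_eigen hM t m, real_inner_smul_left]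
    rw [hc]
    rcases eq_or_ne ⟪hM.eigenvectorBasis m, u⟫ 0 with h0 | h0
    · simp [h0]
    · have hb := hcoef m h0
      have habs : |hM.eigenvalues m ^ t| ≤ r ^ t := by
        rw [abs_pow]; exact pow_le_pow_left₀ (abs_nonneg _) hb t
      rw [mul_pow]
      apply mul_le_mul_of_nonneg_right _ (sq_nonneg _)
      rw [← sq_abs]
      exact pow_le_pow_left₀ (abs_nonneg _) habs 2
  have h1 : 0 ≤ r ^ t * ‖u‖ := by positivity
  nlinarith [norm_nonneg (mvE (W ^ t) u)]

def onesE (n : ℕ) : EuclideanSpace ℝ (Fin n) := WithLp.toLp 2 (fun _ => 1)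

theorem mvE_ones (hrow : ∀ i, ∑ j, W i j = 1) : mvE W (onesE n) = onesE n := by
  ext i; simp [mvE, onesE, hrow i]

theorem mvE_pow_ones (hrow : ∀ i, ∑ j, W i j = 1) (t : ℕ) :
    mvE (W ^ t) (onesE n) = onesE n := by
  induction t with
  | zero => ext i; simp [mvE, onesE, Matrix.one_apply]
  | succ t ih => rw [pow_succ, mvE_mul, mvE_ones hrow, ih]

theorem rowsum_pow (hrow : ∀ i, ∑ j, W i j = 1) (t : ℕ) (i : Fin n) :
    ∑ j, (W ^ t) i j = 1 := by
  have := congrArg (fun v => v.ofLp i) (mvE_pow_ones hrow t)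
  simpa [mvE, onesE] using this

theorem colsum_pow (hM : W.IsHermitian) (hrow : ∀ i, ∑ j, W i j = 1) (t : ℕ) (j : Fin n) :
    ∑ i, (W ^ t) i j = 1 := by
  rw [← rowsum_pow hrow t j]
  exact Finset.sum_congr rfl fun i _ => Wsymm_apply (hM.pow t) j i

theorem coeff_ones_zero (hM : W.IsHermitian) (hrow : ∀ i, ∑ j, W i j = 1)
    (hn : 1 ≤ n) {m₀ : Fin n} (hm₀uniq : ∀ m, hM.eigenvalues m = 1 → m = m₀)
    (u : EuclideanSpace ℝ (Fin n)) (hu : ∑ i, u i = 0) :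
    ⟪hM.eigenvectorBasis m₀, u⟫ = 0 := by
  set e := hM.eigenvectorBasis with he
  set c : Fin n → ℝ := fun m => ⟪e m, onesE n⟫ with hc
  have hczero : ∀ m, m ≠ m₀ → c m = 0 := by
    intro m hm
    have hsym := mvE_symm_inner hM (e m) (onesE n)
    rw [mvE_eigen hM m, mvE_ones hrow, real_inner_smul_left] at hsym
    have hlam : hM.eigenvalues m ≠ 1 := fun h => hm (hm₀uniq m h)
    have : (hM.eigenvalues m - 1) * c m = 0 := by
      simp only [hc, conj_trivial] at hsym ⊢
      linarith [hsym]
    rcases mul_eq_zero.1 this with h | h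
    · exact absurd (by linarith : hM.eigenvalues m = 1) hlam
    · exact h
  have hones : onesE n = c m₀ • e m₀ := by
    rw [← hM.eigenvectorBasis.sum_repr' (onesE n)]
    apply Finset.sum_eq_single_of_mem m₀ (Finset.mem_univ m₀)
    intro m _ hm
    rw [show (⟪e m, onesE n⟫ : ℝ) = c m from rfl, hczero m hm, zero_smul]
  have hinner0 : ⟪onesE n, u⟫ = 0 := by
    simp only [PiLp.inner_apply, RCLike.inner_apply, conj_trivial, onesE, one_mul]
    simpa using hu
  have hinner1 : ⟪onesE n, u⟫ = c m₀ * ⟪e m₀, u⟫ := by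
    rw [hones, real_inner_smul_left]
  have hnorm : (n : ℝ) = c m₀ * c m₀ := by
    have h1 : ⟪onesE n, onesE n⟫ = (n : ℝ) := by
      simp [PiLp.inner_apply, onesE, EuclideanSpace.norm_eq]
    have h2 : ⟪onesE n, onesE n⟫ = c m₀ * c m₀ := by
      conv_lhs => rw [hones]
      rw [real_inner_smul_left, real_inner_smul_right, real_inner_self_eq_norm_sq]
      rw [show ‖e m₀‖ = 1 from hM.eigenvectorBasis.orthonormal.1 m₀]
      ring
    rw [← h1, h2]
  have hc0 : c m₀ ≠ 0 := by
    intro h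
    rw [h, mul_zero] at hnorm
    have : (0:ℝ) < n := by exact_mod_cast hn
    linarith
  rw [hinner0] at hinner1
  exact (mul_eq_zero.1 hinner1.symm).resolve_left hc0

end MatrixLemmas


section CVecLemmas
variable {n p : ℕ}

theorem CVec.sum_apply {ι : Type*} (s : Finset ι) (v : ι → CVec n p) (i : Fin n) :
    (∑ j ∈ s, v j) i = ∑ j ∈ s, v j i :=
  map_sum (AddMonoidHom.mk' (fun u : CVec n p => u i) (fun a b => rfl)) v s

theorem Vec.sum_apply {ι : Type*} (s : Finset ι) (v : ι → Vec p) (a : Fin p) :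
    (∑ j ∈ s, v j) a = ∑ j ∈ s, v j a :=
  map_sum (AddMonoidHom.mk' (fun u : Vec p => u a) (fun x y => rfl)) v s

theorem Vec.norm_sq_eq (x : Vec p) : ‖x‖ ^ 2 = ∑ a, (x a) ^ 2 := by
  rw [EuclideanSpace.norm_eq, Real.sq_sqrt (by positivity)]
  exact Finset.sum_congr rfl fun a _ => by rw [Real.norm_eq_abs, sq_abs]

/-- constant concatenated vector. -/
def onesC {n p : ℕ} (c : Vec p) : CVec n p := WithLp.toLp 2 (fun _ => c)

/-- the `a`-th column of a concatenated vector. -/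
def ccol (v : CVec n p) (a : Fin p) : EuclideanSpace ℝ (Fin n) := WithLp.toLp 2 (fun i => v i a)

theorem CVec.norm_sq_eq (v : CVec n p) : ‖v‖ ^ 2 = ∑ i, ‖v i‖ ^ 2 := by
  rw [PiLp.norm_sq_eq_of_L2]

theorem CVec.norm_sq_eq' (v : CVec n p) :
    ‖v‖ ^ 2 = ∑ a, ‖ccol v a‖ ^ 2 := by
  have hcol : ∀ a : Fin p, ‖ccol v a‖ ^ 2 = ∑ i, (v i a)^2 :=
    fun a => Vec.norm_sq_eq (p := n) (ccol v a)
  rw [CVec.norm_sq_eq]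
  calc ∑ i, ‖v i‖^2 = ∑ i, ∑ a, (v i a)^2 :=
        Finset.sum_congr rfl fun i _ => Vec.norm_sq_eq (v i)
    _ = ∑ a, ∑ i, (v i a)^2 := Finset.sum_comm
    _ = ∑ a, ‖ccol v a‖ ^ 2 := Finset.sum_congr rfl fun a _ => (hcol a).symm

theorem CVec.comp_norm_le (v : CVec n p) (i : Fin n) : ‖v i‖ ≤ ‖v‖ := by
  have h1 : ‖v i‖^2 ≤ ‖v‖^2 := by
    rw [CVec.norm_sq_eq]
    exact Finset.single_le_sum (fun j _ => sq_nonneg ‖v j‖) (Finset.mem_univ i)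
  nlinarith [norm_nonneg (v i), norm_nonneg v]

theorem kron_col (M : Matrix (Fin n) (Fin n) ℝ) (v : CVec n p) (a : Fin p) :
    ccol (kron M v) a = mvE M (ccol v a) := by
  ext i
  simp only [kron, mvE, ccol]
  rw [Vec.sum_apply]
  exact Finset.sum_congr rfl fun j _ => rfl

theorem kron_norm_le (M : Matrix (Fin n) (Fin n) ℝ) {r : ℝ} (hr : 0 ≤ r) (v : CVec n p)
    (h : ∀ a : Fin p, ‖mvE M (ccol v a)‖ ≤ r * ‖ccol v a‖) :
    ‖kron M v‖ ≤ r * ‖v‖ := by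
  have hsq : ‖kron M v‖^2 ≤ (r * ‖v‖)^2 := by
    rw [CVec.norm_sq_eq' (kron M v), mul_pow, CVec.norm_sq_eq' v, Finset.mul_sum]
    apply Finset.sum_le_sum
    intro a _
    rw [kron_col M v a]
    have := h a
    nlinarith [norm_nonneg (mvE M (ccol v a)), norm_nonneg (ccol v a)]
  have h1 : (0:ℝ) ≤ r * ‖v‖ := by positivity
  nlinarith [norm_nonneg (kron M v)]

theorem kron_sub (M : Matrix (Fin n) (Fin n) ℝ) (u v : CVec n p) :
    kron M (u - v) = kron M u - kron M v := by
  ext i : 1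
  show ∑ j, M i j • (u - v) j = (∑ j, M i j • u j) - ∑ j, M i j • v j
  rw [← Finset.sum_sub_distrib]
  exact Finset.sum_congr rfl fun j _ => by
    rw [show (u - v) j = u j - v j from rfl, smul_sub]

theorem onesC_apply (c : Vec p) (i : Fin n) : onesC (n:=n) c i = c := rfl

theorem kron_const (M : Matrix (Fin n) (Fin n) ℝ) (hrow : ∀ i, ∑ j, M i j = 1) (c : Vec p) :
    kron M (onesC c) = onesC c := by
  ext i : 1
  show ∑ j, M i j • c = c
  rw [← Finset.sum_smul, hrow i, one_smul]

end CVecLemmas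

set_option maxHeartbeats 1000000 in
/-- Bounded gradient deviation for NEAR-DGDᵗ: if `0 < α < 1/L` and
`y_{i,0} = s₀` for all `i`, then for all `k ≥ 1` and all `i`:
`‖∇fᵢ(x_{i,k}) − ∇fᵢ(x̄_k)‖ ≤ βᵗDLᵢ` and `‖g_k − ḡ_k‖ ≤ βᵗDL`. -/
theorem near_dgdt_bounded_gradient_deviation
    (n p t : ℕ) (hn : 1 ≤ n) (hp : 1 ≤ p) (ht : 1 ≤ t)
    -- local objective functions: μᵢ-strongly convex, differentiable,
    -- with Lᵢ-Lipschitz gradients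
    (f : Fin n → Vec p → ℝ) (μ Lc : Fin n → ℝ) (L : ℝ)
    (hμpos : ∀ i, 0 < μ i) (hLpos : ∀ i, 0 < Lc i)
    (hsc : ∀ i, StrongConvexOn Set.univ (μ i) (f i))
    (hdiff : ∀ i, Differentiable ℝ (f i))
    (hLip : ∀ i, LipschitzWith (Real.toNNReal (Lc i)) (fun z => gradient (f i) z))
    (hLmax : IsGreatest (Set.range Lc) L)
    -- u*: the concatenation of the unique minimizers uᵢ* of the fᵢ
    (ustar : CVec n p) (hustar : ∀ i, ∀ z, f i (ustar i) ≤ f i z)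
    -- W is symmetric, doubly stochastic, with eigenvalues in (−1, 1]
    (W : Matrix (Fin n) (Fin n) ℝ) (hWsymm : W.IsHermitian)
    (hrow : ∀ i, ∑ j, W i j = 1) (hcol : ∀ j, ∑ i, W i j = 1)
    (hWnn : ∀ i j, 0 ≤ W i j)
    (heig : ∀ i, hWsymm.eigenvalues i ∈ Set.Ioc (-1 : ℝ) 1)
    (hone : ∃! i, hWsymm.eigenvalues i = 1)
    -- β ∈ (0,1): the second largest magnitude of the eigenvalues of W
    (β : ℝ) (hβmem : β ∈ Set.Ioo (0 : ℝ) 1)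
    (hβ : IsGreatest {r : ℝ | ∃ i, hWsymm.eigenvalues i ≠ 1 ∧ r = |hWsymm.eigenvalues i|} β)
    -- stepsize 0 < α < 1/L
    (α : ℝ) (hα : 0 < α) (hαlt : α < 1 / L)
    -- NEAR-DGDᵗ iterates: x_k = Zᵗ y_k, y_{k+1} = x_k − α∇f(x_k), with y₀ = (s₀;…;s₀)
    (x y : ℕ → CVec n p)
    (hxdef : ∀ k, x k = kron (W ^ t) (y k))
    (hydef : ∀ k, y (k + 1) = x k - α • gradConcat f (x k))
    (s0 : Vec p) (hy0 : ∀ i, y 0 i = s0)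
    -- γ = minᵢ μᵢLᵢ/(μᵢ + Lᵢ), ν = 2αγ, and the bound D
    (γ ν D : ℝ)
    (hγ : IsLeast (Set.range fun i => μ i * Lc i / (μ i + Lc i)) γ)
    (hν : ν = 2 * α * γ)
    (hD : D = ‖y 0 - ustar‖ + ((ν + 4) / ν) * ‖ustar‖)
    -- the mean iterate, the averaged gradients g and ḡ
    (xbar : ℕ → Vec p) (hxbar : ∀ k, xbar k = (n : ℝ)⁻¹ • ∑ i, x k i)
    (g gbar : ℕ → Vec p)
    (hg : ∀ k, g k = (n : ℝ)⁻¹ • ∑ i, gradient (f i) (x k i))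
    (hgbar : ∀ k, gbar k = (n : ℝ)⁻¹ • ∑ i, gradient (f i) (xbar k)) :
    ∀ k, 1 ≤ k →
      (∀ i, ‖gradient (f i) (x k i) - gradient (f i) (xbar k)‖ ≤ β ^ t * D * Lc i) ∧
      ‖g k - gbar k‖ ≤ β ^ t * D * L := by
  -- constants
  obtain ⟨⟨iL, hiL⟩, hLub⟩ := hLmax
  have hLpos' : 0 < L := hiL ▸ hLpos iL
  have hLub' : ∀ i, Lc i ≤ L := fun i => hLub ⟨i, rfl⟩
  obtain ⟨⟨iγ, hiγ⟩, hγlb⟩ := hγ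
  have hγle : ∀ i, γ ≤ μ i * Lc i / (μ i + Lc i) := fun i => hγlb ⟨i, rfl⟩
  have hn0 : (n:ℝ) ≠ 0 := by positivity
  -- gradients
  have hf'g : ∀ i (z : Vec p), HasGradientAt (f i) (gradient (f i) z) z :=
    fun i z => ((hdiff i) z).hasGradientAt
  have hlipi : ∀ i (a b : Vec p), ‖gradient (f i) a - gradient (f i) b‖ ≤ Lc i * ‖a - b‖ := by
    intro i a b
    have h := (hLip i).dist_le_mul a b
    rwa [dist_eq_norm, dist_eq_norm, Real.coe_toNNReal _ (hLpos i).le] at h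
  have hw : (EuclideanSpace.single (⟨0, hp⟩ : Fin p) (1:ℝ)) ≠ 0 := by
    intro h
    have := congrArg norm h
    rw [EuclideanSpace.norm_single, norm_zero] at this
    norm_num at this
  have hμL : ∀ i, μ i ≤ Lc i := fun i =>
    NDGD.mu_le_c (hf'g i) (hsc i) (hlipi i) _ hw
  have hθpos : ∀ i, 0 < μ i * Lc i / (μ i + Lc i) := fun i => by
    have h1 := hμpos i; have h2 := hLpos i; positivity
  have hγpos : 0 < γ := hiγ ▸ hθpos iγ
  have hθleL2 : ∀ i, μ i * Lc i / (μ i + Lc i) ≤ L / 2 := by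
    intro i
    have h1 := hμpos i; have h2 := hLpos i; have h3 := hμL i; have h4 := hLub' i
    rw [div_le_div_iff₀ (by linarith) (by norm_num)]
    nlinarith
  have hαL : α * L < 1 := (lt_div_iff₀ hLpos').mp hαlt
  have hνpos : 0 < ν := by rw [hν]; positivity
  have hνlt : ν < 1 := by
    have hγL2 : γ ≤ L / 2 := hiγ ▸ hθleL2 iγ
    rw [hν]; nlinarith
  have hαc : ∀ i, α * (μ i + Lc i) ≤ 2 := by
    intro i
    have h3 := hμL i; have h4 := hLub' i
    nlinarith
  -- minimizer gradient is zero
  have hgrad0 : ∀ i, gradient (f i) (ustar i) = 0 := by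
    intro i
    have hmin : IsMinOn (f i) Set.univ (ustar i) := isMinOn_iff.2 fun z _ => hustar i z
    have hfd := (hmin.isLocalMin Filter.univ_mem).fderiv_eq_zero
    simp [gradient, hfd]
  -- per-block contraction
  have hcontr : ∀ i (z : Vec p),
      ‖z - α • gradient (f i) z - ustar i‖^2 ≤ (1 - ν) * ‖z - ustar i‖^2 := by
    intro i z
    have h := NDGD.contraction (hf'g i) (hμpos i) (hμL i) (hsc i) (hlipi i)
      (hgrad0 i) hα (hαc i) z
    have hmono : (1 - 2*α*(μ i * Lc i/(μ i + Lc i))) ≤ 1 - ν := by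
      have := hγle i; rw [hν]; nlinarith
    exact h.trans (mul_le_mul_of_nonneg_right hmono (sq_nonneg _))
  -- spectral norm bounds on kron
  obtain ⟨m₀, hm₀, hm₀uniq⟩ := hone
  have hK1 : ∀ v : CVec n p, ‖kron (W^t) v‖ ≤ ‖v‖ := by
    intro v
    have h := kron_norm_le (W^t) (r := 1) zero_le_one v ?_
    · simpa using h
    · intro a
      have := spec_bound hWsymm t zero_le_one (ccol v a) ?_
      · simpa using this
      · intro m _
        have h1 := heig m
        exact abs_le.2 ⟨by linarith [h1.1], h1.2⟩
  have hβpos := hβmem.1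
  have hK2 : ∀ v : CVec n p, (∀ a, ∑ i, v i a = 0) → ‖kron (W^t) v‖ ≤ β^t * ‖v‖ := by
    intro v hv0
    apply kron_norm_le (W^t) (r := β^t) (by positivity) v
    intro a
    have h := spec_bound hWsymm t (le_of_lt hβpos) (ccol v a) ?_
    · exact h
    · intro m hm
      have hzero := coeff_ones_zero hWsymm hrow hn hm₀uniq (ccol v a) (hv0 a)
      have hmne : m ≠ m₀ := by
        intro h'; rw [h'] at hm; exact hm hzero
      have hne1 : hWsymm.eigenvalues m ≠ 1 := fun h' => hmne (hm₀uniq m h')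
      exact hβ.2 ⟨m, hne1, rfl⟩
  -- x_k stays close to ustar
  have hxk : ∀ k, ‖x k - ustar‖ ≤ ‖y k - ustar‖ + 2*‖ustar‖ := by
    intro k
    rw [hxdef k]
    have hsplit : kron (W^t) (y k) - ustar
        = kron (W^t) (y k - ustar) + (kron (W^t) ustar - ustar) := by
      rw [kron_sub]; abel
    rw [hsplit]
    have e1 := hK1 (y k - ustar)
    have e2 : ‖kron (W^t) ustar - ustar‖ ≤ 2*‖ustar‖ := by
      have := hK1 ustar
      have := norm_sub_le (kron (W^t) ustar) ustar
      linarith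
    calc ‖kron (W^t) (y k - ustar) + (kron (W^t) ustar - ustar)‖
        ≤ ‖kron (W^t) (y k - ustar)‖ + ‖kron (W^t) ustar - ustar‖ := norm_add_le _ _
      _ ≤ ‖y k - ustar‖ + 2*‖ustar‖ := by linarith
  -- the uniform bound R
  set R : ℝ := ‖y 0 - ustar‖ + 4/ν*‖ustar‖ with hR
  clear_value R
  have hyR : ∀ k, ‖y k - ustar‖ ≤ R := by
    intro k
    induction k with
    | zero =>
      have : (0:ℝ) ≤ 4/ν*‖ustar‖ := by positivity
      linarith
    | succ k ih =>
      have h1 : ‖y (k+1) - ustar‖^2 ≤ (1-ν) * ‖x k - ustar‖^2 := by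
        rw [CVec.norm_sq_eq, CVec.norm_sq_eq, Finset.mul_sum]
        apply Finset.sum_le_sum
        intro i _
        have hyi : y (k+1) i = x k i - α • gradient (f i) (x k i) := by
          rw [hydef k]; rfl
        show ‖y (k+1) i - ustar i‖^2 ≤ (1-ν) * ‖x k i - ustar i‖^2
        rw [hyi]
        exact hcontr i (x k i)
      have hb : (0:ℝ) ≤ 1 - ν/2 := by linarith
      have h2 : ‖y (k+1) - ustar‖ ≤ (1 - ν/2) * ‖x k - ustar‖ := by
        have h3 : ‖y (k+1) - ustar‖^2 ≤ ((1-ν/2) * ‖x k - ustar‖)^2 := by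
          rw [mul_pow]
          nlinarith [sq_nonneg ‖x k - ustar‖,
            mul_nonneg (sq_nonneg ν) (sq_nonneg ‖x k - ustar‖)]
        nlinarith [norm_nonneg (y (k+1) - ustar),
          mul_nonneg hb (norm_nonneg (x k - ustar))]
      have h4 := hxk k
      have h5 : ‖y (k+1) - ustar‖ ≤ (1-ν/2) * (R + 2*‖ustar‖) := by
        apply h2.trans
        apply mul_le_mul_of_nonneg_left _ hb
        linarith
      have hR4 : 4/ν * ‖ustar‖ ≤ R := by
        have : (0:ℝ) ≤ ‖y 0 - ustar‖ := norm_nonneg _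
        rw [hR]; linarith
      have hkey : ν/2 * (4/ν * ‖ustar‖) = 2*‖ustar‖ := by
        rw [show ν/2 * (4/ν * ‖ustar‖) = 2*(ν*ν⁻¹)*‖ustar‖ by ring,
          mul_inv_cancel₀ (ne_of_gt hνpos)]
        ring
      have hmul := mul_le_mul_of_nonneg_left hR4 (by linarith : (0:ℝ) ≤ ν/2)
      nlinarith [norm_nonneg ustar]
  -- D = R + ‖ustar‖
  have hDeq : D = R + ‖ustar‖ := by
    rw [hD, hR]
    have : (ν + 4)/ν = 1 + 4/ν := by field_simp
    rw [this]; ring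
  have hD0 : 0 ≤ D := by
    rw [hDeq, hR]
    have : (0:ℝ) ≤ 4/ν*‖ustar‖ := by positivity
    have := norm_nonneg (y 0 - ustar)
    have := norm_nonneg ustar
    linarith
  -- mean preservation
  have hsumx : ∀ k, ∑ i, x k i = ∑ i, y k i := by
    intro k
    rw [hxdef k]
    show ∑ i, (∑ j, (W^t) i j • y k j) = ∑ j, y k j
    rw [Finset.sum_comm]
    apply Finset.sum_congr rfl
    intro j _
    rw [← Finset.sum_smul, colsum_pow hWsymm hrow t j, one_smul]
  -- Pythagoras: removing the mean decreases the norm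
  have hQ : ∀ v : CVec n p, ‖v - (onesC (n:=n) ((n:ℝ)⁻¹ • ∑ i, v i))‖ ≤ ‖v‖ := by
    intro v
    set b : Vec p := (n:ℝ)⁻¹ • ∑ i, v i with hb
    have hsb : ∑ i, v i = (n:ℝ) • b := by
      rw [hb, smul_smul, mul_inv_cancel₀ hn0, one_smul]
    have hsq : ‖v - (onesC (n:=n) b)‖^2 = ‖v‖^2 - (n:ℝ) * ‖b‖^2 := by
      rw [CVec.norm_sq_eq, CVec.norm_sq_eq]
      have hterm : ∀ i : Fin n, ‖(v - (onesC (n:=n) b)) i‖^2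
          = ‖v i‖^2 - 2*⟪v i, b⟫ + ‖b‖^2 := by
        intro i
        show ‖v i - b‖^2 = _
        rw [norm_sub_sq_real]
      have hsInner : ∑ i, (inner ℝ (v i) b : ℝ) = (n:ℝ) * ‖b‖^2 := by
        rw [← sum_inner, hsb, real_inner_smul_left, real_inner_self_eq_norm_sq]
      rw [Finset.sum_congr rfl fun i _ => hterm i]
      calc ∑ i, (‖v i‖^2 - 2*⟪v i, b⟫ + ‖b‖^2)
          = (∑ i, ‖v i‖^2) - 2*((n:ℝ)*‖b‖^2) + (n:ℝ)*‖b‖^2 := by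
            rw [Finset.sum_add_distrib, Finset.sum_sub_distrib, ← Finset.mul_sum, hsInner,
              Finset.sum_const, Finset.card_univ, Fintype.card_fin, nsmul_eq_mul]
        _ = (∑ i, ‖v i‖^2) - (n:ℝ)*‖b‖^2 := by ring
    have h2 : ‖v - (onesC (n:=n) b)‖^2 ≤ ‖v‖^2 := by
      rw [hsq]
      have : (0:ℝ) ≤ (n:ℝ) * ‖b‖^2 := by positivity
      linarith
    nlinarith [norm_nonneg (v - (onesC (n:=n) b)), norm_nonneg v]
  -- main deviation bound
  have hdev : ∀ k, ‖x k - (onesC (n:=n) (xbar k))‖ ≤ β^t * D := by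
    intro k
    have hbar : xbar k = (n:ℝ)⁻¹ • ∑ i, y k i := by rw [hxbar k, hsumx k]
    set w : CVec n p := y k - (onesC (n:=n) ((n:ℝ)⁻¹ • ∑ i, y k i)) with hwdef
    have hxw : x k - (onesC (n:=n) (xbar k)) = kron (W^t) w := by
      rw [hwdef, kron_sub, ← hxdef k, kron_const (W^t) (rowsum_pow hrow t) _, hbar]
    have hw0 : ∀ a, ∑ i, w i a = 0 := by
      intro a
      have hwa : ∀ i : Fin n, w i a = y k i a - (n:ℝ)⁻¹ * (∑ j, y k j a) := by
        intro i
        show (y k i - (n:ℝ)⁻¹ • ∑ j, y k j) a = _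
        rw [show (y k i - (n:ℝ)⁻¹ • ∑ j, y k j) a
          = y k i a - ((n:ℝ)⁻¹ • ∑ j, y k j) a from rfl]
        congr 1
        rw [show ((n:ℝ)⁻¹ • ∑ j, y k j) a = (n:ℝ)⁻¹ * (∑ j, y k j) a from rfl,
          Vec.sum_apply]
      rw [Finset.sum_congr rfl fun i _ => hwa i, Finset.sum_sub_distrib,
        Finset.sum_const, Finset.card_univ, Fintype.card_fin]
      rw [nsmul_eq_mul]
      field_simp
      ring
    have hwD : ‖w‖ ≤ D := by
      have hdecomp : w = ((y k - ustar) -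
            (onesC (n:=n) ((n:ℝ)⁻¹ • ∑ i, (y k - ustar) i)))
          + (ustar - (onesC (n:=n) ((n:ℝ)⁻¹ • ∑ i, ustar i))) := by
        ext i : 1
        show y k i - (n:ℝ)⁻¹ • ∑ j, y k j
          = ((y k i - ustar i) - (n:ℝ)⁻¹ • ∑ j, (y k - ustar) j)
            + (ustar i - (n:ℝ)⁻¹ • ∑ j, ustar j)
        have hss : ∑ j, (y k - ustar) j = ∑ j, y k j - ∑ j, ustar j := by
          rw [← Finset.sum_sub_distrib]
          exact Finset.sum_congr rfl fun j _ => rfl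
        rw [hss, smul_sub]
        abel
      rw [hdecomp]
      have q1 := hQ (y k - ustar)
      have q2 := hQ ustar
      have := norm_add_le ((y k - ustar) -
            (onesC (n:=n) ((n:ℝ)⁻¹ • ∑ i, (y k - ustar) i)))
          (ustar - (onesC (n:=n) ((n:ℝ)⁻¹ • ∑ i, ustar i)))
      have hyk := hyR k
      rw [hDeq]
      linarith
    rw [hxw]
    calc ‖kron (W^t) w‖ ≤ β^t * ‖w‖ := hK2 w hw0
      _ ≤ β^t * D := by
        apply mul_le_mul_of_nonneg_left hwD (by positivity)
  -- conclusion
  intro k hk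
  have hβtD : (0:ℝ) ≤ β^t * D := by positivity
  have hcomp : ∀ i, ‖x k i - xbar k‖ ≤ β^t * D := by
    intro i
    have h := CVec.comp_norm_le (x k - (onesC (n:=n) (xbar k))) i
    have he : (x k - (onesC (n:=n) (xbar k))) i = x k i - xbar k := rfl
    rw [he] at h
    exact h.trans (hdev k)
  constructor
  · intro i
    calc ‖gradient (f i) (x k i) - gradient (f i) (xbar k)‖
        ≤ Lc i * ‖x k i - xbar k‖ := hlipi i _ _
      _ ≤ Lc i * (β^t * D) := mul_le_mul_of_nonneg_left (hcomp i) (hLpos i).le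
      _ = β^t * D * Lc i := by ring
  · rw [hg k, hgbar k, ← smul_sub, ← Finset.sum_sub_distrib, norm_smul]
    have h1 : ‖(n:ℝ)⁻¹‖ = (n:ℝ)⁻¹ := by
      rw [Real.norm_eq_abs, abs_of_pos (by positivity)]
    rw [h1]
    have h2 : ‖∑ i, (gradient (f i) (x k i) - gradient (f i) (xbar k))‖
        ≤ (n:ℝ) * (L * (β^t * D)) := by
      apply (norm_sum_le _ _).trans
      have hterm : ∀ i : Fin n, ‖gradient (f i) (x k i) - gradient (f i) (xbar k)‖
          ≤ L * (β^t * D) := by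
        intro i
        calc ‖gradient (f i) (x k i) - gradient (f i) (xbar k)‖
            ≤ Lc i * ‖x k i - xbar k‖ := hlipi i _ _
          _ ≤ Lc i * (β^t * D) := mul_le_mul_of_nonneg_left (hcomp i) (hLpos i).le
          _ ≤ L * (β^t * D) := mul_le_mul_of_nonneg_right (hLub' i) hβtD
      calc ∑ i, ‖gradient (f i) (x k i) - gradient (f i) (xbar k)‖
          ≤ ∑ _i : Fin n, L * (β^t * D) := Finset.sum_le_sum fun i _ => hterm i
        _ = (n:ℝ) * (L * (β^t * D)) := by
          rw [Finset.sum_const, Finset.card_univ, Fintype.card_fin, nsmul_eq_mul]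
    calc (n:ℝ)⁻¹ * ‖∑ i, (gradient (f i) (x k i) - gradient (f i) (xbar k))‖
        ≤ (n:ℝ)⁻¹ * ((n:ℝ) * (L * (β^t * D))) :=
          mul_le_mul_of_nonneg_left h2 (by positivity)
      _ = β^t * D * L := by field_simp
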